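/- Let X₁,…,X_n be independent mean-zero random variables in L^ν for 1 ≤ ν ≤ 2. Then E[((∑_{i=1}^n X_i)⁺)^ν] ≤ 4·∑_{k=1}^n E[|X_k|^ν]. -/

import Mathlib

open MeasureTheory Real ProbabilityTheory Finset
open scoped NNReal


lemma vbe_subadd {x y q : ℝ} (hx : 0 ≤ x) (hy : 0 ≤ y) (hq0 : 0 ≤ q) (hq1 : q ≤ 1) :
    (x + y) ^ q ≤ x ^ q + y ^ q := by
  have h := NNReal.rpow_add_le_add_rpow x.toNNReal y.toNNReal hq0 hq1
  have h2 := NNReal.coe_le_coe.2 h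
  push_cast [NNReal.coe_rpow] at h2
  rwa [Real.coe_toNNReal _ hx, Real.coe_toNNReal _ hy] at h2

lemma vbe_caseA {p : ℝ} (hp1 : 1 ≤ p) (hp2 : p ≤ 2) {t : ℝ} (ht : 0 ≤ t) :
    (1 + t) ^ p ≤ 1 + p * t + t ^ p := by
  have hp0 : (0:ℝ) < p := by linarith
  set F : ℝ → ℝ := fun u => 1 + p * u + u ^ p - (1 + u) ^ p with hF
  have hrc : Continuous fun u : ℝ => u ^ p := Real.continuous_rpow_const hp0.le
  have hFc : ContinuousOn F (Set.Ici 0) := by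
    apply Continuous.continuousOn
    exact ((continuous_const.add (continuous_const.mul continuous_id)).add hrc).sub
      (hrc.comp (continuous_const.add continuous_id))
  have key : ∀ u ∈ interior (Set.Ici (0:ℝ)),
      HasDerivAt F (p + p * u ^ (p-1) - 1 * p * (1+u) ^ (p-1)) u := by
    intro u hu
    rw [interior_Ici] at hu
    have hu0 : (0:ℝ) < u := hu
    have h1 : HasDerivAt (fun u : ℝ => 1 + p * u) p u := by
      simpa using ((hasDerivAt_id u).const_mul p).const_add 1
    have h2 : HasDerivAt (fun u : ℝ => u ^ p) (p * u ^ (p-1)) u :=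
      Real.hasDerivAt_rpow_const (Or.inl hu0.ne')
    have h3 : HasDerivAt (fun u : ℝ => (1 + u) ^ p) (1 * p * (1+u) ^ (p-1)) u :=
      ((hasDerivAt_id u).const_add 1).rpow_const (Or.inl (by positivity))
    exact (h1.add h2).sub h3
  have hmono : MonotoneOn F (Set.Ici 0) := by
    apply monotoneOn_of_deriv_nonneg (convex_Ici 0) hFc
    · intro u hu
      exact ((key u hu).differentiableAt).differentiableWithinAt
    · intro u hu
      rw [(key u hu).deriv]
      rw [interior_Ici] at hu
      have hu0 : (0:ℝ) < u := hu
      have hsub : (1 + u) ^ (p-1) ≤ 1 + u ^ (p-1) := by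
        have h := vbe_subadd (zero_le_one) hu0.le (by linarith : (0:ℝ) ≤ p - 1)
          (by linarith : p - 1 ≤ 1)
        rwa [Real.one_rpow] at h
      nlinarith [hsub]
  have h0 : F 0 = 0 := by
    simp [hF, Real.zero_rpow hp0.ne', Real.one_rpow]
  have hend := hmono Set.self_mem_Ici (Set.mem_Ici.2 ht) ht
  rw [h0] at hend
  simp only [hF] at hend
  linarith

lemma vbe_caseB {p : ℝ} (hp1 : 1 ≤ p) (hp2 : p ≤ 2) {u : ℝ} (hu0 : 0 ≤ u) (hu1 : u ≤ 1) :
    (1 - u) ^ p ≤ 1 - p * u + 2 * u ^ p := by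
  have hp0 : (0:ℝ) < p := by linarith
  set G : ℝ → ℝ := fun u => 1 - p * u + 2 * u ^ p - (1 - u) ^ p with hG
  have hrc : Continuous fun u : ℝ => u ^ p := Real.continuous_rpow_const hp0.le
  have hGc : ContinuousOn G (Set.Icc 0 1) := by
    apply Continuous.continuousOn
    exact ((continuous_const.sub (continuous_const.mul continuous_id)).add
      (continuous_const.mul hrc)).sub (hrc.comp (continuous_const.sub continuous_id))
  have key : ∀ v ∈ interior (Set.Icc (0:ℝ) 1),
      HasDerivAt G (-p + 2 * (p * v ^ (p-1)) - (-1) * p * (1-v) ^ (p-1)) v := by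
    intro v hv
    rw [interior_Icc] at hv
    have h1 : HasDerivAt (fun v : ℝ => 1 - p * v) (-p) v := by
      simpa using (((hasDerivAt_id v).const_mul p).const_sub 1)
    have h2 : HasDerivAt (fun v : ℝ => 2 * v ^ p) (2 * (p * v ^ (p-1))) v :=
      (Real.hasDerivAt_rpow_const (Or.inl (ne_of_gt hv.1))).const_mul 2
    have h3 : HasDerivAt (fun v : ℝ => (1 - v) ^ p) ((-1) * p * (1-v) ^ (p-1)) v :=
      ((hasDerivAt_id v).const_sub 1).rpow_const (Or.inl (by simp only [id_eq]; exact ne_of_gt (by linarith [hv.2])))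
    exact (h1.add h2).sub h3
  have hmono : MonotoneOn G (Set.Icc 0 1) := by
    apply monotoneOn_of_deriv_nonneg (convex_Icc 0 1) hGc
    · intro v hv
      exact ((key v hv).differentiableAt).differentiableWithinAt
    · intro v hv
      rw [(key v hv).deriv]
      rw [interior_Icc] at hv
      have ha : v ≤ v ^ (p-1) := by
        have := Real.rpow_le_rpow_of_exponent_ge hv.1 hv.2.le (by linarith : p - 1 ≤ 1)
        rwa [Real.rpow_one] at this
      have hb : 1 - v ≤ (1-v) ^ (p-1) := by
        have h1v : (0:ℝ) < 1 - v := by linarith [hv.2]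
        have := Real.rpow_le_rpow_of_exponent_ge h1v (by linarith [hv.1]) (by linarith : p - 1 ≤ 1)
        rwa [Real.rpow_one] at this
      nlinarith [hv.1.le]
  have h0 : G 0 = 0 := by
    simp [hG, Real.zero_rpow hp0.ne', Real.one_rpow]
  have hend := hmono (Set.mem_Icc.2 ⟨le_refl 0, zero_le_one⟩) (Set.mem_Icc.2 ⟨hu0, hu1⟩) hu0
  rw [h0] at hend
  simp only [hG] at hend
  linarith

lemma vbe_core {p : ℝ} (hp1 : 1 ≤ p) (hp2 : p ≤ 2) (t : ℝ) :
    |1 + t| ^ p ≤ 1 + p * t + 2 * |t| ^ p := by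
  have hp0 : (0:ℝ) < p := by linarith
  rcases le_or_gt 0 t with ht | ht
  · rw [abs_of_nonneg (by linarith : (0:ℝ) ≤ 1 + t), abs_of_nonneg ht]
    have := vbe_caseA hp1 hp2 ht
    nlinarith [Real.rpow_nonneg ht p]
  · rcases le_or_gt (-1) t with ht1 | ht1
    · rw [abs_of_nonneg (by linarith : (0:ℝ) ≤ 1 + t), abs_of_neg ht]
      have := vbe_caseB hp1 hp2 (by linarith : (0:ℝ) ≤ -t) (by linarith : -t ≤ 1)
      have he : 1 - -t = 1 + t := by ring
      rw [he] at this
      linarith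
    · rw [abs_of_nonpos (by linarith : 1 + t ≤ 0), abs_of_neg ht]
      set s : ℝ := -t - 1 with hs
      have hs0 : 0 ≤ s := by simp [hs]; linarith
      have hB : 1 + p * s ≤ (1 + s) ^ p := one_add_mul_self_le_rpow_one_add (by linarith) hp1
      have hC : s ^ p ≤ (1 + s) ^ p := Real.rpow_le_rpow hs0 (by linarith) hp0.le
      have he1 : -(1 + t) = s := by simp [hs]; ring
      have he2 : -t = 1 + s := by simp [hs]
      rw [he1, he2]
      nlinarith

lemma vbe_ptwise {p : ℝ} (hp1 : 1 ≤ p) (hp2 : p ≤ 2) (x y : ℝ) :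
    |x + y| ^ p ≤ |x| ^ p + p * (|x| ^ (p - 2) * x * y) + 2 * |y| ^ p := by
  have hp0 : (0:ℝ) < p := by linarith
  rcases eq_or_ne x 0 with rfl | hx
  · simp [Real.zero_rpow hp0.ne']
    nlinarith [Real.rpow_nonneg (abs_nonneg y) p]
  · have hax : (0:ℝ) < |x| := abs_pos.2 hx
    set t : ℝ := y / x with htdef
    have h1 : |x + y| = |x| * |1 + t| := by
      rw [← abs_mul]
      congr 1
      rw [htdef]
      field_simp
    have h2 : |x + y| ^ p = |x| ^ p * |1 + t| ^ p := by
      rw [h1, Real.mul_rpow (abs_nonneg x) (abs_nonneg _)]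
    have hcore := vbe_core hp1 hp2 t
    have h3 : |x| ^ p * |1 + t| ^ p ≤ |x| ^ p * (1 + p * t + 2 * |t| ^ p) :=
      mul_le_mul_of_nonneg_left hcore (Real.rpow_nonneg (abs_nonneg x) p)
    have c1 : |x| ^ p * t = |x| ^ (p - 2) * x * y := by
      have e1 : |x| ^ p = |x| ^ (p - 2) * |x| ^ (2:ℝ) := by
        rw [← Real.rpow_add hax]; ring_nf
      have e2 : |x| ^ (2:ℝ) = x ^ 2 := by
        rw [Real.rpow_two, sq_abs]
      rw [e1, e2, htdef]
      field_simp
    have c2 : |x| ^ p * |t| ^ p = |y| ^ p := by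
      rw [← Real.mul_rpow (abs_nonneg x) (abs_nonneg t), ← abs_mul]
      congr 2
      rw [htdef]
      field_simp
    calc |x + y| ^ p = |x| ^ p * |1 + t| ^ p := h2
      _ ≤ |x| ^ p * (1 + p * t + 2 * |t| ^ p) := h3
      _ = |x| ^ p + p * (|x| ^ p * t) + 2 * (|x| ^ p * |t| ^ p) := by ring
      _ = |x| ^ p + p * (|x| ^ (p - 2) * x * y) + 2 * |y| ^ p := by rw [c1, c2]

lemma vbe_two_rpow {p a b : ℝ} (hp : 0 ≤ p) (ha : 0 ≤ a) (hb : 0 ≤ b) :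
    (a + b) ^ p ≤ 2 ^ p * (a ^ p + b ^ p) := by
  have h1 : a + b ≤ 2 * max a b := by
    rcases le_total a b with h | h
    · rw [max_eq_right h]; linarith
    · rw [max_eq_left h]; linarith
  have hm : (0:ℝ) ≤ max a b := le_max_of_le_left ha
  calc (a + b) ^ p ≤ (2 * max a b) ^ p := Real.rpow_le_rpow (by linarith) h1 hp
    _ = 2 ^ p * (max a b) ^ p := Real.mul_rpow (by norm_num) hm
    _ ≤ 2 ^ p * (a ^ p + b ^ p) := by
        apply mul_le_mul_of_nonneg_left _ (Real.rpow_nonneg (by norm_num) p)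
        rcases le_total a b with h | h
        · rw [max_eq_right h]; nlinarith [Real.rpow_nonneg ha p]
        · rw [max_eq_left h]; nlinarith [Real.rpow_nonneg hb p]

lemma vbe_phi_bound {p : ℝ} (hp1 : 1 ≤ p) (x : ℝ) :
    |(|x| ^ (p - 2) * x)| ≤ 1 + |x| ^ p := by
  rcases eq_or_ne x 0 with rfl | hx
  · simp
    positivity
  · have hax : (0:ℝ) < |x| := abs_pos.2 hx
    have h1 : |(|x| ^ (p - 2) * x)| = |x| ^ (p - 1) := by
      rw [abs_mul, abs_of_nonneg (Real.rpow_nonneg (abs_nonneg x) _),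
        ← Real.rpow_add_one hax.ne']
      ring_nf
    rw [h1]
    rcases le_total |x| 1 with h | h
    · have := Real.rpow_le_one (abs_nonneg x) h (by linarith : (0:ℝ) ≤ p - 1)
      nlinarith [Real.rpow_nonneg (abs_nonneg x) p]
    · have := Real.rpow_le_rpow_of_exponent_le h (by linarith : p - 1 ≤ p)
      linarith

lemma vbe_int_add {Ω : Type*} [MeasurableSpace Ω] {μ : Measure Ω} {p : ℝ} (hp1 : 1 ≤ p)
    {f g : Ω → ℝ} (hmf : Measurable f) (hmg : Measurable g)
    (hfp : Integrable (fun ω => |f ω| ^ p) μ) (hgp : Integrable (fun ω => |g ω| ^ p) μ) :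
    Integrable (fun ω => |f ω + g ω| ^ p) μ := by
  apply Integrable.mono' (((hfp.add hgp).const_mul ((2:ℝ) ^ p)))
  · apply Measurable.aestronglyMeasurable
    fun_prop
  · filter_upwards with ω
    rw [Real.norm_eq_abs, abs_of_nonneg (Real.rpow_nonneg (abs_nonneg _) _)]
    calc |f ω + g ω| ^ p ≤ (|f ω| + |g ω|) ^ p :=
          Real.rpow_le_rpow (abs_nonneg _) (abs_add_le _ _) (by linarith)
      _ ≤ 2 ^ p * (|f ω| ^ p + |g ω| ^ p) :=
          vbe_two_rpow (by linarith) (abs_nonneg _) (abs_nonneg _)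

lemma vbe_key_two {Ω : Type*} [MeasurableSpace Ω] (μ : Measure Ω) [IsProbabilityMeasure μ]
    {p : ℝ} (hp1 : 1 ≤ p) (hp2 : p ≤ 2)
    {f g : Ω → ℝ} (hmf : Measurable f) (hmg : Measurable g)
    (hindep : IndepFun f g μ)
    (hfi : Integrable f μ) (hgi : Integrable g μ) (hg0 : ∫ ω, g ω ∂μ = 0)
    (hfp : Integrable (fun ω => |f ω| ^ p) μ) (hgp : Integrable (fun ω => |g ω| ^ p) μ) :
    ∫ ω, |f ω + g ω| ^ p ∂μ ≤ (∫ ω, |f ω| ^ p ∂μ) + 2 * ∫ ω, |g ω| ^ p ∂μ := by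
  set φ : ℝ → ℝ := fun x => |x| ^ (p - 2) * x with hφ
  have hφm : Measurable φ := by fun_prop
  have hφf_int : Integrable (fun ω => φ (f ω)) μ := by
    apply Integrable.mono' ((integrable_const (1:ℝ)).add hfp)
    · exact (hφm.comp hmf).aestronglyMeasurable
    · filter_upwards with ω
      exact vbe_phi_bound hp1 (f ω)
  have hprod_indep : IndepFun (fun ω => φ (f ω)) g μ :=
    hindep.comp hφm measurable_id
  have hprod_int : Integrable (fun ω => φ (f ω) * g ω) μ :=
    hprod_indep.integrable_mul hφf_int hgi
  have hmul : ∫ ω, φ (f ω) * g ω ∂μ = (∫ ω, φ (f ω) ∂μ) * ∫ ω, g ω ∂μ :=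
    IndepFun.integral_mul_eq_mul_integral hprod_indep hφf_int.aestronglyMeasurable hgi.aestronglyMeasurable
  have hsum_int : Integrable (fun ω => |f ω + g ω| ^ p) μ := vbe_int_add hp1 hmf hmg hfp hgp
  have hrhs_int : Integrable
      (fun ω => |f ω| ^ p + p * (φ (f ω) * g ω) + 2 * |g ω| ^ p) μ :=
    (hfp.add (hprod_int.const_mul p)).add (hgp.const_mul 2)
  have hmono : ∫ ω, |f ω + g ω| ^ p ∂μ ≤
      ∫ ω, (|f ω| ^ p + p * (φ (f ω) * g ω) + 2 * |g ω| ^ p) ∂μ := by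
    apply integral_mono hsum_int hrhs_int
    intro ω
    have := vbe_ptwise hp1 hp2 (f ω) (g ω)
    simp only [hφ]
    linarith
  calc ∫ ω, |f ω + g ω| ^ p ∂μ
      ≤ ∫ ω, (|f ω| ^ p + p * (φ (f ω) * g ω) + 2 * |g ω| ^ p) ∂μ := hmono
    _ = (∫ ω, |f ω| ^ p ∂μ) + p * ∫ ω, φ (f ω) * g ω ∂μ + 2 * ∫ ω, |g ω| ^ p ∂μ := by
        have e1 : ∫ ω, (|f ω| ^ p + p * (φ (f ω) * g ω) + 2 * |g ω| ^ p) ∂μ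
            = (∫ ω, (|f ω| ^ p + p * (φ (f ω) * g ω)) ∂μ) + ∫ ω, 2 * |g ω| ^ p ∂μ :=
          integral_add (hfp.add (hprod_int.const_mul p)) (hgp.const_mul 2)
        have e2 : ∫ ω, (|f ω| ^ p + p * (φ (f ω) * g ω)) ∂μ
            = (∫ ω, |f ω| ^ p ∂μ) + ∫ ω, p * (φ (f ω) * g ω) ∂μ :=
          integral_add hfp (hprod_int.const_mul p)
        rw [e1, e2, MeasureTheory.integral_const_mul, MeasureTheory.integral_const_mul]
    _ = (∫ ω, |f ω| ^ p ∂μ) + 2 * ∫ ω, |g ω| ^ p ∂μ := by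
        rw [hmul, hg0]; ring

lemma vbe_sum {Ω : Type*} [MeasurableSpace Ω] (μ : Measure Ω) [IsProbabilityMeasure μ]
    {ι : Type*} {X : ι → Ω → ℝ} (hXm : ∀ i, Measurable (X i))
    (hind : iIndepFun X μ)
    {p : ℝ} (hp1 : 1 ≤ p) (hp2 : p ≤ 2)
    (hXp : ∀ i, Integrable (fun ω => |X i ω| ^ p) μ)
    (hmean : ∀ i, Integrable (X i) μ ∧ ∫ ω, X i ω ∂μ = 0)
    (s : Finset ι) :
    Integrable (fun ω => |∑ i ∈ s, X i ω| ^ p) μ ∧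
      ∫ ω, |∑ i ∈ s, X i ω| ^ p ∂μ ≤ 2 * ∑ i ∈ s, ∫ ω, |X i ω| ^ p ∂μ := by
  classical
  have hp0 : (0:ℝ) < p := by linarith
  induction s using Finset.induction_on with
  | empty =>
      simp [Real.zero_rpow hp0.ne']
  | @insert a s ha ih =>
      obtain ⟨ih_int, ih_le⟩ := ih
      have hfm : Measurable (fun ω => ∑ i ∈ s, X i ω) := by
        exact Finset.measurable_sum s fun i _ => hXm i
      have hfi : Integrable (fun ω => ∑ i ∈ s, X i ω) μ :=
        integrable_finset_sum s fun i _ => (hmean i).1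
      have hindep : IndepFun (fun ω => ∑ i ∈ s, X i ω) (X a) μ := by
        have h := hind.indepFun_finsetSum_of_notMem hXm ha
        have he : (∑ j ∈ s, X j) = fun ω => ∑ j ∈ s, X j ω := by
          funext ω; exact Finset.sum_apply ω s X
        rwa [he] at h
      have hrw : ∀ ω, ∑ i ∈ insert a s, X i ω = (∑ i ∈ s, X i ω) + X a ω := by
        intro ω
        rw [Finset.sum_insert ha]
        ring
      have hint2 : Integrable (fun ω => |∑ i ∈ insert a s, X i ω| ^ p) μ := by
        simp only [hrw]
        exact vbe_int_add hp1 hfm (hXm a) ih_int (hXp a)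
      refine ⟨hint2, ?_⟩
      have hkey := vbe_key_two μ hp1 hp2 hfm (hXm a) hindep hfi (hmean a).1 (hmean a).2
        ih_int (hXp a)
      calc ∫ ω, |∑ i ∈ insert a s, X i ω| ^ p ∂μ
          = ∫ ω, |(∑ i ∈ s, X i ω) + X a ω| ^ p ∂μ := by simp only [hrw]
        _ ≤ (∫ ω, |∑ i ∈ s, X i ω| ^ p ∂μ) + 2 * ∫ ω, |X a ω| ^ p ∂μ := hkey
        _ ≤ 2 * ∑ i ∈ s, ∫ ω, |X i ω| ^ p ∂μ + 2 * ∫ ω, |X a ω| ^ p ∂μ := by linarith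
        _ = 2 * ∑ i ∈ insert a s, ∫ ω, |X i ω| ^ p ∂μ := by
            rw [Finset.sum_insert ha]; ring

theorem stmt9 {Ω : Type*} [MeasurableSpace Ω] (μ : Measure Ω) [IsProbabilityMeasure μ]
    (n : ℕ) (X : Fin n → Ω → ℝ)
    (hXm : ∀ i, Measurable (X i))
    (hind : ProbabilityTheory.iIndepFun X μ)
    (ν : ℝ) (hν1 : 1 ≤ ν) (hν2 : ν ≤ 2)
    (hXν : ∀ i, Integrable (fun ω => |X i ω| ^ ν) μ)
    (hmean : ∀ i, Integrable (X i) μ ∧ ∫ ω, X i ω ∂μ = 0) :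
    ∫ ω, (max (∑ i, X i ω) 0) ^ ν ∂μ ≤ 4 * ∑ k, ∫ ω, |X k ω| ^ ν ∂μ := by
  obtain ⟨hint, hle⟩ := vbe_sum μ hXm hind hν1 hν2 hXν hmean Finset.univ
  have hSm : Measurable (fun ω => ∑ i, X i ω) :=
    Finset.measurable_sum Finset.univ fun i _ => hXm i
  have hpt : ∀ ω, (max (∑ i, X i ω) 0) ^ ν ≤ |∑ i, X i ω| ^ ν := fun ω =>
    Real.rpow_le_rpow (le_max_right _ 0) (max_le (le_abs_self _) (abs_nonneg _)) (by linarith)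
  have hmax_int : Integrable (fun ω => (max (∑ i, X i ω) 0) ^ ν) μ := by
    apply Integrable.mono' hint
    · apply Measurable.aestronglyMeasurable
      fun_prop
    · filter_upwards with ω
      rw [Real.norm_eq_abs, abs_of_nonneg (Real.rpow_nonneg (le_max_right _ 0) _)]
      exact hpt ω
  have h1 : ∫ ω, (max (∑ i, X i ω) 0) ^ ν ∂μ ≤ ∫ ω, |∑ i, X i ω| ^ ν ∂μ :=
    integral_mono hmax_int hint hpt
  have h2 : (0:ℝ) ≤ ∑ k, ∫ ω, |X k ω| ^ ν ∂μ :=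
    Finset.sum_nonneg fun k _ =>
      integral_nonneg fun ω => Real.rpow_nonneg (abs_nonneg _) _
  linarith
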